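/- There exists a unit vector x in a J-invariant subspace X with xᵀJx = 0 if and only if the matrix AᵀJA (A an orthonormal basis matrix of X) has both 1 and −1 as eigenvalues, i.e., is neither positive definite nor negative definite. -/

import Mathlib

open Matrix

/-- there is a unit vector `x` in the `J`-invariant subspace `X`
with `xᵀJx = 0` iff `AᵀJA` has both `1` and `-1` as eigenvalues. -/
theorem stmt_2 (N ℓ : ℕ) (hℓ : 0 < ℓ)
    (J : Matrix (Fin N) (Fin N) ℝ)
    (d : Fin N → ℝ) (hd : ∀ i, d i = 1 ∨ d i = -1)
    (hJ : J = Matrix.diagonal d)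
    (X : Submodule ℝ (Fin N → ℝ))
    (hJX : Submodule.map (Matrix.mulVecLin J) X = X)
    (A : Matrix (Fin N) (Fin ℓ) ℝ)
    (hortho : Aᵀ * A = 1)
    (hspan : X = Submodule.span ℝ (Set.range (fun j => Aᵀ j))) :
    (∃ x : Fin N → ℝ, x ∈ X ∧ x ⬝ᵥ x = 1 ∧ x ⬝ᵥ J.mulVec x = 0) ↔
      ((∃ v : Fin ℓ → ℝ, v ≠ 0 ∧ (Aᵀ * J * A).mulVec v = (1 : ℝ) • v) ∧
       (∃ v : Fin ℓ → ℝ, v ≠ 0 ∧ (Aᵀ * J * A).mulVec v = (-1 : ℝ) • v)) := by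
  set M : Matrix (Fin ℓ) (Fin ℓ) ℝ := Aᵀ * J * A with hM
  -- basic facts
  have hJsymm : Jᵀ = J := by rw [hJ, Matrix.diagonal_transpose]
  have hJJ : J * J = 1 := by
    rw [hJ, Matrix.diagonal_mul_diagonal]
    rw [show (fun i => d i * d i) = (fun _ => (1:ℝ)) from funext fun i => by
      rcases hd i with h | h <;> simp [h]]
    exact Matrix.diagonal_one
  have hsum : ∀ v : Fin ℓ → ℝ, ∑ j, v j • Aᵀ j = A.mulVec v := by
    intro v
    funext i
    rw [Finset.sum_apply]
    simp [Matrix.mulVec, dotProduct, Matrix.transpose_apply, mul_comm]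
  -- every A *ᵥ v is in X
  have hmem : ∀ v : Fin ℓ → ℝ, A.mulVec v ∈ X := by
    intro v
    rw [hspan, Submodule.mem_span_range_iff_exists_fun]
    exact ⟨v, hsum v⟩
  -- every x ∈ X is of the form A *ᵥ v
  have hrep : ∀ x ∈ X, ∃ v : Fin ℓ → ℝ, x = A.mulVec v := by
    intro x hx
    rw [hspan, Submodule.mem_span_range_iff_exists_fun] at hx
    obtain ⟨v, hv⟩ := hx
    exact ⟨v, by rw [← hv, hsum]⟩
  -- Aᵀ *ᵥ (A *ᵥ v) = v
  have hAtA : ∀ v : Fin ℓ → ℝ, Aᵀ.mulVec (A.mulVec v) = v := by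
    intro v
    rw [Matrix.mulVec_mulVec, hortho, Matrix.one_mulVec]
  -- dot products: (A *ᵥ u) ⬝ᵥ (B *ᵥ v) = u ⬝ᵥ ((Aᵀ * B) *ᵥ v)
  have hdot : ∀ (B : Matrix (Fin N) (Fin N) ℝ) (u : Fin ℓ → ℝ) (w : Fin N → ℝ),
      (A.mulVec u) ⬝ᵥ (B.mulVec w) = u ⬝ᵥ ((Aᵀ * B).mulVec w) := by
    intro B u w
    rw [← Matrix.mulVec_mulVec, Matrix.dotProduct_mulVec u Aᵀ, Matrix.vecMul_transpose]
  have hdotAA : ∀ u v : Fin ℓ → ℝ, (A.mulVec u) ⬝ᵥ (A.mulVec v) = u ⬝ᵥ v := by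
    intro u v
    have := hdot 1 u (A.mulVec v)
    simpa [Matrix.one_mulVec, hortho, hAtA] using this
  -- J ∘ A = A ∘ M at vector level
  have hJA : ∀ v : Fin ℓ → ℝ, J.mulVec (A.mulVec v) = A.mulVec (M.mulVec v) := by
    intro v
    have h1 : J.mulVec (A.mulVec v) ∈ X := by
      rw [← hJX]
      exact ⟨A.mulVec v, hmem v, rfl⟩
    obtain ⟨w, hw⟩ := hrep _ h1
    have hMw : M.mulVec v = w := by
      rw [hM, ← Matrix.mulVec_mulVec, ← Matrix.mulVec_mulVec, hw, hAtA]
    rw [hMw, ← hw]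
  -- M is an involution at vector level
  have hMM : ∀ v : Fin ℓ → ℝ, M.mulVec (M.mulVec v) = v := by
    intro v
    have : A.mulVec (M.mulVec (M.mulVec v)) = A.mulVec v := by
      rw [← hJA, ← hJA, Matrix.mulVec_mulVec, hJJ, Matrix.one_mulVec]
    have h2 := congrArg (Aᵀ.mulVec) this
    rwa [hAtA, hAtA] at h2
  -- M symmetric
  have hMsymm : Mᵀ = M := by
    rw [hM, Matrix.transpose_mul, Matrix.transpose_mul, Matrix.transpose_transpose,
      hJsymm, Matrix.mul_assoc]
  have hMdot : ∀ u v : Fin ℓ → ℝ, (M.mulVec u) ⬝ᵥ v = u ⬝ᵥ (M.mulVec v) := by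
    intro u v
    rw [Matrix.dotProduct_mulVec, ← Matrix.vecMul_transpose, hMsymm]
  -- x ⬝ᵥ J x = v ⬝ᵥ M v when x = A v
  have hquad : ∀ v : Fin ℓ → ℝ, (A.mulVec v) ⬝ᵥ J.mulVec (A.mulVec v) = v ⬝ᵥ M.mulVec v := by
    intro v
    rw [hJA, hdotAA]
  constructor
  · rintro ⟨x, hxX, hxx, hxJx⟩
    obtain ⟨v, rfl⟩ := hrep x hxX
    rw [hdotAA] at hxx
    rw [hquad] at hxJx
    set p : Fin ℓ → ℝ := (1/2 : ℝ) • (v + M.mulVec v) with hp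
    set q : Fin ℓ → ℝ := (1/2 : ℝ) • (v - M.mulVec v) with hq
    have hMp : M.mulVec p = p := by
      rw [hp, Matrix.mulVec_smul, Matrix.mulVec_add, hMM]
      rw [add_comm]
    have hMq : M.mulVec q = -q := by
      rw [hq, Matrix.mulVec_smul, Matrix.mulVec_sub, hMM, ← smul_neg, neg_sub]
    have hMvMv : M.mulVec v ⬝ᵥ M.mulVec v = 1 := by
      rw [hMdot, hMM, hxx]
    have hMvv : M.mulVec v ⬝ᵥ v = 0 := by
      rw [dotProduct_comm]; exact hxJx
    have hpp : p ⬝ᵥ p = 1/2 := by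
      rw [hp]
      simp only [smul_dotProduct, dotProduct_smul, add_dotProduct,
        dotProduct_add, hxx, hxJx, hMvMv, hMvv, smul_eq_mul]
      norm_num
    have hqq : q ⬝ᵥ q = 1/2 := by
      rw [hq]
      simp only [smul_dotProduct, dotProduct_smul, sub_dotProduct,
        dotProduct_sub, hxx, hxJx, hMvMv, hMvv, smul_eq_mul]
      norm_num
    have hpne : p ≠ 0 := by
      intro h; rw [h] at hpp; simp at hpp
    have hqne : q ≠ 0 := by
      intro h; rw [h] at hqq; simp at hqq
    exact ⟨⟨p, hpne, by rw [hMp, one_smul]⟩, ⟨q, hqne, by rw [hMq, neg_one_smul]⟩⟩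
  · rintro ⟨⟨u, hu0, hMu⟩, ⟨w, hw0, hMw⟩⟩
    rw [one_smul] at hMu
    rw [neg_one_smul] at hMw
    have huw : u ⬝ᵥ w = 0 := by
      have h1 : u ⬝ᵥ w = -(u ⬝ᵥ w) := by
        conv_lhs => rw [← hMu]
        rw [hMdot, hMw, dotProduct_neg]
      linarith
    have hdnn : ∀ z : Fin ℓ → ℝ, 0 ≤ z ⬝ᵥ z := fun z =>
      Finset.sum_nonneg fun i _ => mul_self_nonneg _
    have huu : 0 < u ⬝ᵥ u := by
      rcases lt_or_eq_of_le (hdnn u) with h | h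
      · exact h
      · exact absurd (dotProduct_self_eq_zero.mp h.symm) hu0
    have hww : 0 < w ⬝ᵥ w := by
      rcases lt_or_eq_of_le (hdnn w) with h | h
      · exact h
      · exact absurd (dotProduct_self_eq_zero.mp h.symm) hw0
    set a : ℝ := (Real.sqrt (2 * (u ⬝ᵥ u)))⁻¹ with ha
    set b : ℝ := (Real.sqrt (2 * (w ⬝ᵥ w)))⁻¹ with hb
    have hsu : Real.sqrt (2 * (u ⬝ᵥ u)) * Real.sqrt (2 * (u ⬝ᵥ u)) = 2 * (u ⬝ᵥ u) :=
      Real.mul_self_sqrt (by positivity)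
    have hsune : Real.sqrt (2 * (u ⬝ᵥ u)) ≠ 0 := by positivity
    have hsw : Real.sqrt (2 * (w ⬝ᵥ w)) * Real.sqrt (2 * (w ⬝ᵥ w)) = 2 * (w ⬝ᵥ w) :=
      Real.mul_self_sqrt (by positivity)
    have hswne : Real.sqrt (2 * (w ⬝ᵥ w)) ≠ 0 := by positivity
    have ha2 : a * a * (u ⬝ᵥ u) = 1/2 := by
      rw [ha, ← mul_inv, hsu]
      field_simp
    have hb2 : b * b * (w ⬝ᵥ w) = 1/2 := by
      rw [hb, ← mul_inv, hsw]
      field_simp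
    set v : Fin ℓ → ℝ := a • u + b • w with hv
    have hwu : w ⬝ᵥ u = 0 := by rw [dotProduct_comm]; exact huw
    have hvv : v ⬝ᵥ v = 1 := by
      rw [hv]
      simp only [smul_dotProduct, dotProduct_smul, add_dotProduct,
        dotProduct_add, huw, hwu, smul_eq_mul]
      linear_combination ha2 + hb2
    have hMv : M.mulVec v = a • u - b • w := by
      rw [hv, Matrix.mulVec_add, Matrix.mulVec_smul, Matrix.mulVec_smul, hMu, hMw,
        smul_neg, ← sub_eq_add_neg]
    have hvMv : v ⬝ᵥ M.mulVec v = 0 := by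
      rw [hMv, hv]
      simp only [smul_dotProduct, dotProduct_smul, add_dotProduct,
        dotProduct_sub, huw, hwu, smul_eq_mul]
      linear_combination ha2 - hb2
    exact ⟨A.mulVec v, hmem v, by rw [hdotAA, hvv], by rw [hquad, hvMv]⟩
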